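/- Let p be an odd prime and let i ≥ 0 and r ≥ i(p+1) be integers. The map Q ↦ θ^i·Q is an injective F-linear map from V_{r−i(p+1)} into V_r whose image is exactly V_r^{(i)}. Moreover, for all a, b, c, d ∈ 𝔽_p and all Q ∈ V_{r−i(p+1)}, the substitution of θ^i·Q by (a,b,c,d) equals (ad−bc)^i·θ^i·(substitution of Q by (a,b,c,d)); i.e., multiplication by θ^i realizes V_r^{(i)} as V_{r−i(p+1)} twisted by the i-th power of the determinant character. -/
import Mathlib


open MvPolynomial

/-- The substitution action: `P(X,Y) ↦ P(aX+cY, bX+dY)` on `F[X,Y] = MvPolynomial (Fin 2) F`,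
for `a b c d ∈ 𝔽_p` viewed in `F` via the canonical map. -/
noncomputable def substACT (p : ℕ) [Fact p.Prime] (F : Type*) [Field F]
    [Algebra (ZMod p) F] (a b c d : ZMod p) :
    MvPolynomial (Fin 2) F →ₐ[F] MvPolynomial (Fin 2) F :=
  aeval (fun i : Fin 2 =>
    if i = 0 then C (algebraMap (ZMod p) F a) * X 0 + C (algebraMap (ZMod p) F c) * X 1
    else C (algebraMap (ZMod p) F b) * X 0 + C (algebraMap (ZMod p) F d) * X 1)

/-- If `A ≠ 0` is homogeneous of degree `m` and `A*B` is homogeneous of degree `m+n`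
(over a field), then `B` is homogeneous of degree `n`. -/
theorem zigzag_quot_homog {σ F : Type*} [Field F] {A B : MvPolynomial σ F} {m n : ℕ}
    (hA : A.IsHomogeneous m) (hA0 : A ≠ 0) (hAB : (A * B).IsHomogeneous (m + n)) :
    B.IsHomogeneous n := by
  have key : ∀ k, k ≠ n → homogeneousComponent k B = 0 := by
    intro k hk
    have h1 : homogeneousComponent (m + k) (A * B) = A * homogeneousComponent k B := by
      conv_lhs => rw [← sum_homogeneousComponent B, Finset.mul_sum, map_sum]
      rw [Finset.sum_eq_single k]
      · rw [homogeneousComponent_of_mem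
          ((mem_homogeneousSubmodule _ _).2 (hA.mul (homogeneousComponent_isHomogeneous k B))),
          if_pos rfl]
      · intro j _ hj
        rw [homogeneousComponent_of_mem
          ((mem_homogeneousSubmodule _ _).2 (hA.mul (homogeneousComponent_isHomogeneous j B))),
          if_neg (by omega)]
      · intro hk'
        rw [homogeneousComponent_eq_zero _ B (by simp at hk'; omega), mul_zero, map_zero]
    have h2 : homogeneousComponent (m + k) (A * B) = 0 := by
      rw [homogeneousComponent_of_mem ((mem_homogeneousSubmodule _ _).2 hAB),
        if_neg (by omega)]
    rcases mul_eq_zero.1 (h1.symm.trans h2) with h | h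
    · exact absurd h hA0
    · exact h
  intro d hd
  by_contra hdn
  have h0 := coeff_homogeneousComponent (σ := σ) (R := F) d.degree B d
  rw [key d.degree (by rw [Finsupp.degree_eq_weight_one]; exact hdn), if_pos rfl] at h0
  simp at h0
  exact hd h0.symm

theorem zigzag_theta_ne {p : ℕ} [Fact p.Prime] {F : Type*} [Field F] :
    (X 0 ^ p * X 1 - X 0 * X 1 ^ p : MvPolynomial (Fin 2) F) ≠ 0 := by
  have hp1 : p ≠ 1 := (Fact.out : p.Prime).ne_one
  intro h
  have h2 : (X 0 ^ p * X 1 : MvPolynomial (Fin 2) F) = X 0 * X 1 ^ p := by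
    linear_combination h
  rw [X_pow_eq_monomial, X_pow_eq_monomial, X, X, monomial_mul, monomial_mul,
    one_mul] at h2
  rcases (monomial_eq_monomial_iff _ _ _ _).1 h2 with h3 | h3
  · have h4 := Finsupp.ext_iff.1 h3.1 0
    simp [Finsupp.single_apply] at h4
    exact hp1 h4
  · exact one_ne_zero h3.1

theorem zigzag_theta_homog {p : ℕ} {F : Type*} [Field F] :
    (X 0 ^ p * X 1 - X 0 * X 1 ^ p : MvPolynomial (Fin 2) F).IsHomogeneous (p + 1) := by
  have h1 : (X 0 ^ p * X 1 : MvPolynomial (Fin 2) F).IsHomogeneous (p + 1) := by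
    simpa using ((isHomogeneous_X F (0 : Fin 2)).pow p).mul (isHomogeneous_X F 1)
  have h2 : (X 0 * X 1 ^ p : MvPolynomial (Fin 2) F).IsHomogeneous (p + 1) := by
    simpa [add_comm] using (isHomogeneous_X F (0 : Fin 2)).mul
      ((isHomogeneous_X F (1 : Fin 2)).pow p)
  exact h1.sub h2

theorem zigzag_subst_theta (p : ℕ) [Fact p.Prime] (F : Type*) [Field F]
    [Algebra (ZMod p) F] (a b c d : ZMod p) :
    substACT p F a b c d (X 0 ^ p * X 1 - X 0 * X 1 ^ p) =
      C (algebraMap (ZMod p) F (a * d - b * c)) * (X 0 ^ p * X 1 - X 0 * X 1 ^ p) := by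
  haveI : CharP F p := charP_of_injective_algebraMap (algebraMap (ZMod p) F).injective p
  have hX0 : substACT p F a b c d (X 0) =
      C (algebraMap (ZMod p) F a) * X 0 + C (algebraMap (ZMod p) F c) * X 1 := by
    simp [substACT]
  have hX1 : substACT p F a b c d (X 1) =
      C (algebraMap (ZMod p) F b) * X 0 + C (algebraMap (ZMod p) F d) * X 1 := by
    simp [substACT]
  have frob : ∀ u v : ZMod p,
      ((C (algebraMap (ZMod p) F u) * X 0 + C (algebraMap (ZMod p) F v) * X 1
        : MvPolynomial (Fin 2) F)) ^ p =
      C (algebraMap (ZMod p) F u) * X 0 ^ p + C (algebraMap (ZMod p) F v) * X 1 ^ p := by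
    intro u v
    rw [add_pow_char, mul_pow, mul_pow, ← map_pow, ← map_pow, ← map_pow, ← map_pow,
      ZMod.pow_card, ZMod.pow_card]
  rw [map_sub, map_mul, map_mul, map_pow, map_pow, hX0, hX1, frob a c, frob b d]
  simp only [map_sub, map_mul]
  ring

/-- Let `p` be an odd prime, `i ≥ 0` and `r ≥ i(p+1)`.  The map
`Q ↦ θ^i·Q` (with `θ = X^p Y − X Y^p`) is an injective `F`-linear map (it is the
restriction of the `F`-linear multiplication-by-`θ^i` map) from `V_{r−i(p+1)}`
into `V_r`, with image exactly `V_r^{(i)}`; moreover it intertwines the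
substitution action up to the twist by the `i`-th power of the determinant:
`(θ^i·Q)(aX+cY, bX+dY) = (ad−bc)^i · θ^i · Q(aX+cY, bX+dY)`. -/
theorem zigzag_stmt2 (p : ℕ) [Fact p.Prime] (hp : Odd p)
    (F : Type*) [Field F] [Algebra (ZMod p) F] [IsAlgClosure (ZMod p) F]
    (i r : ℕ) (hr : i * (p + 1) ≤ r)
    (θ : MvPolynomial (Fin 2) F) (hθ : θ = X 0 ^ p * X 1 - X 0 * X 1 ^ p) :
    -- maps `V_{r-i(p+1)}` into `V_r^{(i)}`
    (∀ Q : MvPolynomial (Fin 2) F, Q.IsHomogeneous (r - i * (p + 1)) →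
      (θ ^ i * Q).IsHomogeneous r ∧ θ ^ i ∣ θ ^ i * Q) ∧
    -- injective
    (∀ Q Q' : MvPolynomial (Fin 2) F, Q.IsHomogeneous (r - i * (p + 1)) →
      Q'.IsHomogeneous (r - i * (p + 1)) → θ ^ i * Q = θ ^ i * Q' → Q = Q') ∧
    -- image is exactly `V_r^{(i)}`
    (∀ P : MvPolynomial (Fin 2) F, P.IsHomogeneous r → θ ^ i ∣ P →
      ∃ Q : MvPolynomial (Fin 2) F, Q.IsHomogeneous (r - i * (p + 1)) ∧ P = θ ^ i * Q) ∧
    -- equivariance: `V_r^{(i)} ≅ V_{r-i(p+1)} ⊗ D^i`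
    (∀ a b c d : ZMod p, ∀ Q : MvPolynomial (Fin 2) F,
      Q.IsHomogeneous (r - i * (p + 1)) →
      substACT p F a b c d (θ ^ i * Q) =
        C (algebraMap (ZMod p) F ((a * d - b * c) ^ i)) *
          (θ ^ i * substACT p F a b c d Q)) := by
  have hθ0 : θ ≠ 0 := hθ ▸ zigzag_theta_ne
  have hθi0 : θ ^ i ≠ 0 := pow_ne_zero i hθ0
  have hθih : (θ ^ i).IsHomogeneous (i * (p + 1)) := by
    rw [mul_comm]
    exact (hθ ▸ zigzag_theta_homog).pow i
  have hadd : i * (p + 1) + (r - i * (p + 1)) = r := Nat.add_sub_cancel' hr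
  refine ⟨?_, ?_, ?_, ?_⟩
  · intro Q hQ
    exact ⟨hadd ▸ hθih.mul hQ, Dvd.intro Q rfl⟩
  · intro Q Q' _ _ h
    exact mul_left_cancel₀ hθi0 h
  · rintro P hP ⟨Q, rfl⟩
    exact ⟨Q, zigzag_quot_homog hθih hθi0 (show (θ ^ i * Q).IsHomogeneous (i * (p + 1) + (r - i * (p + 1))) by rwa [hadd]), rfl⟩
  · intro a b c d Q _
    rw [map_mul, map_pow, hθ, zigzag_subst_theta, mul_pow, map_pow, map_pow]
    ring
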